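/- Let $0<a<b$, $A=(a+b)/2$, $G=\sqrt{ab}$, $\lambda=A/G$, and $w_0(\tau)=\frac{2A\tau}{G^2+\tau^2}$ for $\tau\in[a,b]$. Then the supremum of $w_0$ on $[a,b]$ equals $\lambda$, attained at $\tau=G$, and for $1\le t<\lambda$ the measure $\mu_{w_0}(t)$ of $\{\tau\in(a,b): w_0(\tau)>t\}$ with respect to $d\tau/\tau$ equals $2\log\big(\frac{\lambda+\sqrt{\lambda^2-t^2}}{t}\big)$. -/

import Mathlib

open MeasureTheory

set_option maxHeartbeats 1000000 in
theorem distribution_function_of_w0 (a b : ℝ) (ha : 0 < a) (hab : a < b) :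
    let A := (a + b) / 2
    let G := Real.sqrt (a * b)
    let lam := A / G
    let w0 : ℝ → ℝ := fun τ => 2 * A * τ / (G ^ 2 + τ ^ 2)
    w0 G = lam ∧ (∀ τ ∈ Set.Icc a b, w0 τ ≤ lam) ∧
    ∀ t : ℝ, 1 ≤ t → t < lam →
      ∫ τ in {τ : ℝ | τ ∈ Set.Ioo a b ∧ w0 τ > t}, (1 / τ)
        = 2 * Real.log ((lam + Real.sqrt (lam ^ 2 - t ^ 2)) / t) := by
  intro A G lam w0
  have hb : 0 < b := ha.trans hab
  have hA : 0 < A := by positivity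
  have hab' : 0 < a * b := by positivity
  have hG : 0 < G := Real.sqrt_pos.mpr hab'
  have hG2 : G ^ 2 = a * b := Real.sq_sqrt hab'.le
  have hGA : G < A := by
    have h2 : G ^ 2 < A ^ 2 := by
      rw [hG2]; show a * b < ((a + b) / 2) ^ 2; nlinarith [sq_nonneg (a - b)]
    exact lt_of_pow_lt_pow_left₀ 2 hA.le h2
  have haG : a < G := by
    have h2 : a ^ 2 < G ^ 2 := by rw [hG2]; nlinarith
    exact lt_of_pow_lt_pow_left₀ 2 hG.le h2
  have hGb : G < b := by
    have h2 : G ^ 2 < b ^ 2 := by rw [hG2]; nlinarith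
    exact lt_of_pow_lt_pow_left₀ 2 hb.le h2
  refine ⟨?_, ?_, ?_⟩
  · show 2 * A * G / (G ^ 2 + G ^ 2) = A / G
    rw [div_eq_div_iff (by positivity) hG.ne']
    ring
  · intro τ hτ
    have hτ0 : 0 < τ := ha.trans_le hτ.1
    show 2 * A * τ / (G ^ 2 + τ ^ 2) ≤ A / G
    rw [div_le_div_iff₀ (by positivity) hG]
    nlinarith [sq_nonneg (G - τ), mul_pos hA hG]
  · intro t ht1 htlam
    have ht0 : 0 < t := lt_of_lt_of_le one_pos ht1
    have htG : t * G < A := (lt_div_iff₀ hG).mp htlam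
    have hdisc : 0 < A ^ 2 - t ^ 2 * G ^ 2 := by nlinarith [mul_pos ht0 hG]
    set s : ℝ := Real.sqrt (A ^ 2 - t ^ 2 * G ^ 2) with hs_def
    have hs0 : 0 < s := Real.sqrt_pos.mpr hdisc
    have hs2 : s ^ 2 = A ^ 2 - t ^ 2 * G ^ 2 := Real.sq_sqrt hdisc.le
    have hsA : s < A := by
      have h2 : s ^ 2 < A ^ 2 := by nlinarith [mul_pos ht0 hG]
      exact lt_of_pow_lt_pow_left₀ 2 hA.le h2
    set τm : ℝ := (A - s) / t with hτm_def
    set τp : ℝ := (A + s) / t with hτp_def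
    have hτm0 : 0 < τm := div_pos (by linarith) ht0
    have hτp0 : 0 < τp := div_pos (by linarith) ht0
    have hmp : τm < τp := by rw [hτm_def, hτp_def]; gcongr; linarith
    -- sum and product of roots
    have hsum : τm + τp = 2 * A / t := by rw [hτm_def, hτp_def]; ring
    have hprod : τm * τp = G ^ 2 := by
      rw [hτm_def, hτp_def, div_mul_div_comm]
      rw [show (A - s) * (A + s) = A ^ 2 - s ^ 2 by ring, hs2]
      field_simp
      ring
    -- a ≤ τm
    have hta : t * a < A := by nlinarith [mul_lt_mul_of_pos_left haG ht0]
    have haτm : a ≤ τm := by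
      have hle : s ≤ A - t * a := by
        apply le_of_pow_le_pow_left₀ two_ne_zero (by linarith)
        have hA2 : A = (a + b) / 2 := rfl
        nlinarith [mul_pos ht0 ha, mul_nonneg (mul_pos ht0 ha).le (sub_nonneg.mpr ht1)]
      rw [hτm_def, le_div_iff₀ ht0]
      linarith [mul_comm a t]
    -- τp ≤ b
    have hbA : A < b := by show (a + b) / 2 < b; linarith
    have htb : A < t * b := by nlinarith
    have hτpb : τp ≤ b := by
      have hle : s ≤ t * b - A := by
        apply le_of_pow_le_pow_left₀ two_ne_zero (by linarith)
        have hAd : 2 * A = a + b := by show 2 * ((a + b) / 2) = a + b; ring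
        have key : 0 ≤ t * b * ((a + b) * (t - 1)) :=
          mul_nonneg (mul_pos ht0 hb).le
            (mul_nonneg (by linarith) (by linarith))
        nlinarith [key, hs2, hG2]
      rw [hτp_def, div_le_iff₀ ht0]
      linarith [mul_comm b t]
    -- the superlevel set is Ioo τm τp
    have hset : {τ : ℝ | τ ∈ Set.Ioo a b ∧ w0 τ > t} = Set.Ioo τm τp := by
      ext τ
      simp only [Set.mem_setOf_eq, Set.mem_Ioo, w0]
      constructor
      · rintro ⟨⟨haτ, hτb⟩, hw⟩
        have hτ0 : 0 < τ := ha.trans haτ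
        have hden : 0 < G ^ 2 + τ ^ 2 := by positivity
        have hq : t * ((τ - τm) * (τ - τp)) < 0 := by
          have h1 : t * (G ^ 2 + τ ^ 2) < 2 * A * τ := (lt_div_iff₀ hden).mp hw
          have hexp : t * ((τ - τm) * (τ - τp)) = t * τ ^ 2 - (τm + τp) * t * τ + t * (τm * τp) := by
            ring
          rw [hexp, hsum, hprod]
          have : (2 * A / t) * t = 2 * A := by field_simp
          rw [this]
          nlinarith
        have hq' : (τ - τm) * (τ - τp) < 0 := by
          nlinarith
        constructor
        · by_contra h
          push_neg at h
          nlinarith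
        · by_contra h
          push_neg at h
          nlinarith
      · rintro ⟨hmτ, hτp'⟩
        have hτ0 : 0 < τ := hτm0.trans hmτ
        have hden : 0 < G ^ 2 + τ ^ 2 := by positivity
        refine ⟨⟨lt_of_le_of_lt haτm hmτ, lt_of_lt_of_le hτp' hτpb⟩, ?_⟩
        show t < 2 * A * τ / (G ^ 2 + τ ^ 2)
        rw [lt_div_iff₀ hden]
        have hq : t * ((τ - τm) * (τ - τp)) < 0 := by
          have : (τ - τm) * (τ - τp) < 0 :=
            mul_neg_of_pos_of_neg (by linarith) (by linarith)
          exact mul_neg_of_pos_of_neg ht0 this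
        have hexp : t * ((τ - τm) * (τ - τp)) = t * τ ^ 2 - (τm + τp) * t * τ + t * (τm * τp) := by
          ring
        rw [hexp, hsum, hprod] at hq
        have h2A : (2 * A / t) * t = 2 * A := by field_simp
        rw [h2A] at hq
        nlinarith
    rw [hset]
    -- compute the integral
    have hint : ∫ τ in Set.Ioo τm τp, (1 / τ) = Real.log (τp / τm) := by
      rw [← MeasureTheory.integral_Ioc_eq_integral_Ioo,
        ← intervalIntegral.integral_of_le hmp.le]
      apply integral_one_div
      rw [Set.uIcc_of_le hmp.le]
      intro h
      exact absurd h.1 (not_le.mpr hτm0)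
    rw [hint]
    -- simplify the RHS
    have hsqrt : Real.sqrt (lam ^ 2 - t ^ 2) = s / G := by
      have : lam ^ 2 - t ^ 2 = (A ^ 2 - t ^ 2 * G ^ 2) / G ^ 2 := by
        show (A / G) ^ 2 - t ^ 2 = _
        field_simp
      rw [this, ← hs2, Real.sqrt_div (sq_nonneg s), Real.sqrt_sq hs0.le, Real.sqrt_sq hG.le]
    rw [hsqrt]
    have hlamτ : (lam + s / G) / t = τp / G := by
      show (A / G + s / G) / t = (A + s) / t / G
      rw [← add_div, div_div, div_div, mul_comm G t]
    rw [hlamτ]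
    have hratio : τp / τm = (τp / G) ^ 2 := by
      rw [div_pow, eq_div_iff (by positivity), div_mul_eq_mul_div,
        div_eq_iff hτm0.ne']
      linear_combination (-τp) * hprod
    rw [hratio, show ((2 : ℝ) = (2 : ℕ)) by norm_num, Real.log_pow]
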